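/- If D is a TAF-domain with trivial Picard group (every invertible ideal is principal) and x ∈ D is an irreducible element (atom), then the principal ideal xD is a 2-absorbing ideal. -/

import Mathlib

/-- An ideal is 2-absorbing if whenever a product of three elements lies in it,
the product of some two of them lies in it. -/
def IsTwoAbsorbing {R : Type*} [CommRing R] (I : Ideal R) : Prop :=
  ∀ a b c : R, a * b * c ∈ I → a * b ∈ I ∨ a * c ∈ I ∨ b * c ∈ I

/-- A TAF-ring: every proper ideal is a finite product of proper 2-absorbing ideals. -/
def IsTAFRing (R : Type*) [CommRing R] : Prop :=
  ∀ I : Ideal R, I ≠ ⊤ → ∃ (n : ℕ) (J : Fin n → Ideal R),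
    (∀ i, J i ≠ ⊤ ∧ IsTwoAbsorbing (J i)) ∧ I = ∏ i, J i

theorem atom_generates_TA_ideal {D : Type*} [CommRing D] [IsDomain D]
    (h : IsTAFRing D)
    (hpic : ∀ I : FractionalIdeal (nonZeroDivisors D) (FractionRing D), IsUnit I →
      ∃ x : FractionRing D, I = FractionalIdeal.spanSingleton (nonZeroDivisors D) x)
    (x : D) (hx : Irreducible x) : IsTwoAbsorbing (Ideal.span {x}) := by
  set K := FractionRing D
  have hxne : x ≠ 0 := hx.ne_zero
  have hxtop : Ideal.span {x} ≠ ⊤ := fun ht =>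
    hx.not_isUnit (Ideal.span_singleton_eq_top.mp ht)
  obtain ⟨n, J, hJ, hEq⟩ := h _ hxtop
  -- the coerced principal ideal is a unit
  have hxK : (algebraMap D K) x ≠ 0 := by
    simpa using (map_ne_zero_iff _ (IsFractionRing.injective D K)).mpr hxne
  have hu : IsUnit ((Ideal.span {x} : Ideal D) : FractionalIdeal (nonZeroDivisors D) K) := by
    rw [FractionalIdeal.coeIdeal_span_singleton]
    refine IsUnit.of_mul_eq_one
      (FractionalIdeal.spanSingleton _ ((algebraMap D K x)⁻¹)) ?_
    rw [FractionalIdeal.spanSingleton_mul_spanSingleton, mul_inv_cancel₀ hxK,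
      FractionalIdeal.spanSingleton_one]
  have hup : IsUnit (∏ i, ((J i : Ideal D) : FractionalIdeal (nonZeroDivisors D) K)) := by
    have : ((∏ i, J i : Ideal D) : FractionalIdeal (nonZeroDivisors D) K)
        = ∏ i, ((J i : Ideal D) : FractionalIdeal (nonZeroDivisors D) K) :=
      map_prod (FractionalIdeal.coeIdealHom (nonZeroDivisors D) K) J Finset.univ
    rw [← this, ← hEq]; exact hu
  -- each factor is principal, generated by some element of D
  have key : ∀ i, ∃ a : D, J i = Ideal.span {a} := by
    intro i
    have hui : IsUnit ((J i : FractionalIdeal (nonZeroDivisors D) K)) := by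
      refine isUnit_of_mul_isUnit_left (y := ∏ j ∈ Finset.univ.erase i,
        ((J j : Ideal D) : FractionalIdeal (nonZeroDivisors D) K)) ?_
      rwa [Finset.mul_prod_erase Finset.univ
        (fun j => ((J j : Ideal D) : FractionalIdeal (nonZeroDivisors D) K))
        (Finset.mem_univ i)]
    obtain ⟨y, hy⟩ := hpic _ hui
    have hyJ : y ∈ ((J i : Ideal D) : FractionalIdeal (nonZeroDivisors D) K) := by
      rw [hy]; exact FractionalIdeal.mem_spanSingleton_self _ _
    obtain ⟨a, haJ, ha⟩ := (FractionalIdeal.mem_coeIdeal _).mp hyJ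
    refine ⟨a, FractionalIdeal.coeIdeal_injective (K := K) ?_⟩
    show ((J i : Ideal D) : FractionalIdeal (nonZeroDivisors D) K)
      = ((Ideal.span {a} : Ideal D) : FractionalIdeal (nonZeroDivisors D) K)
    rw [hy, FractionalIdeal.coeIdeal_span_singleton, ← ha]
  choose a ha using key
  have hprod : Ideal.span {x} = Ideal.span {∏ i, a i} := by
    rw [hEq, ← Ideal.prod_span_singleton]
    exact Finset.prod_congr rfl fun i _ => ha i
  have hassoc : Associated x (∏ i, a i) :=
    Ideal.span_singleton_eq_span_singleton.mp hprod
  have hx' : Irreducible (∏ i, a i) := hassoc.irreducible hx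
  have hnu : ∀ i, ¬ IsUnit (a i) := fun i hi =>
    (hJ i).1 (by rw [ha i]; exact Ideal.span_singleton_eq_top.mpr hi)
  match n, J, hJ, hEq, a, ha, hx', hnu with
  | 0, J, hJ, hEq, a, ha, hx', hnu =>
      exact absurd (isUnit_one : IsUnit (∏ i : Fin 0, a i)) hx'.not_isUnit
  | 1, J, hJ, hEq, a, ha, hx', hnu =>
      have : Ideal.span {x} = J 0 := by rw [hEq, Fin.prod_univ_one]
      rw [this]; exact (hJ 0).2
  | (m+2), J, hJ, hEq, a, ha, hx', hnu =>
      rw [Fin.prod_univ_succ] at hx'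
      rcases hx'.isUnit_or_isUnit rfl with h1 | h2
      · exact absurd h1 (hnu 0)
      · rw [Fin.prod_univ_succ] at h2
        exact absurd (isUnit_of_mul_isUnit_left h2) (hnu 1)
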